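/- Let G be a bipartite graph with matching M, let P be an M-path, and let x, y be vertices of G − V(P) in different partite sets. If e_G({x,y}, P) ≥ |P|/2 + 2, then there exists an edge uv of P not in M such that xu and yv are both edges of G. -/

import Mathlib

open SimpleGraph

lemma aux_support_get {V : Type*} {G : SimpleGraph V} {a b : V} (p : G.Walk a b) :
    ∀ (i : ℕ) (h : i < p.support.length), p.support.get ⟨i, h⟩ = p.getVert i := by
  induction p with
  | nil => intro i h; simp [Walk.support] at h; subst h; rfl
  | cons hadj q ih =>
    intro i h
    cases i with
    | zero => rfl
    | succ j =>
      simp only [Walk.support_cons, List.get_cons_succ]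
      exact ih j (by simp only [Walk.support_cons, List.length_cons] at h; omega)

lemma aux_edges_get {V : Type*} {G : SimpleGraph V} {a b : V} (p : G.Walk a b) :
    ∀ (i : ℕ) (h : i < p.edges.length),
      p.edges.get ⟨i, h⟩ = s(p.getVert i, p.getVert (i + 1)) := by
  induction p with
  | nil => intro i h; simp [Walk.edges] at h
  | cons hadj q ih =>
    intro i h
    cases i with
    | zero => simp [Walk.edges_cons, Walk.getVert_cons_succ]
    | succ j =>
      simp only [Walk.edges_cons, List.get_cons_succ]
      exact ih j (by simp only [Walk.edges_cons, List.length_cons] at h; omega)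

/-- Insertion lemma for paths: let `G` be a bipartite graph with matching `M`,
`P` an `M`-path (alternating, starting and ending with edges of `M`), and
`x, y` vertices of `G − V(P)` in different partite sets.  If
`e_G({x,y}, P) ≥ |P|/2 + 2` (stated as `2·e_G({x,y},P) ≥ |P| + 4`, where
`|P| = P.length + 1` is the number of vertices of `P`), then there is an edge
`uv` of `P` not in `M` with `xu, yv ∈ E(G)`. -/
theorem stmt_12 {V : Type*} [Fintype V] [DecidableEq V]
    (G : SimpleGraph V) (X : Finset V)
    (hbip : ∀ u v : V, G.Adj u v → (u ∈ X ↔ v ∉ X))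
    (M : Finset (Sym2 V)) (hMsub : ∀ e ∈ M, e ∈ G.edgeSet)
    (hMmatch : ∀ v : V, ∀ e ∈ M, ∀ f ∈ M, v ∈ e → v ∈ f → e = f)
    (a b : V) (P : G.Walk a b) (hP : P.IsPath)
    (hPalt : ∀ i (h : i < P.edges.length), P.edges.get ⟨i, h⟩ ∈ M ↔ Even i)
    (hPodd : Odd P.edges.length)
    (x y : V) (hx : x ∉ P.support) (hy : y ∉ P.support)
    (hxy : x ∈ X ↔ y ∉ X)
    (hcnt : (P.length + 1) + 4 ≤ 2 * ({v : V | v ∈ P.support ∧ G.Adj x v}.ncard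
      + {v : V | v ∈ P.support ∧ G.Adj y v}.ncard)) :
    ∃ u v : V, s(u, v) ∈ P.edges ∧ s(u, v) ∉ M ∧ G.Adj x u ∧ G.Adj y v := by
  classical
  by_contra hcon
  push_neg at hcon
  set n := P.length with hn
  rw [P.length_edges] at hPodd
  obtain ⟨k, hk⟩ := hPodd
  -- getVert is injective on indices ≤ n
  have hinj : ∀ i j : ℕ, i ≤ n → j ≤ n → P.getVert i = P.getVert j → i = j := by
    intro i j hi hj hij
    have hi' : i < P.support.length := by rw [P.length_support]; omega
    have hj' : j < P.support.length := by rw [P.length_support]; omega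
    have := hP.support_nodup
    have h1 : P.support.get ⟨i, hi'⟩ = P.support.get ⟨j, hj'⟩ := by
      rw [aux_support_get, aux_support_get, hij]
    have := (List.Nodup.get_inj_iff hP.support_nodup).mp h1
    exact Fin.mk.inj_iff.mp this
  -- index sets
  set Sx : Finset ℕ := (Finset.range (n + 1)).filter (fun i => G.Adj x (P.getVert i)) with hSx
  set Sy : Finset ℕ := (Finset.range (n + 1)).filter (fun i => G.Adj y (P.getVert i)) with hSy
  have hcard : ∀ (z : V) (Sz : Finset ℕ),
      Sz = (Finset.range (n + 1)).filter (fun i => G.Adj z (P.getVert i)) →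
      {v : V | v ∈ P.support ∧ G.Adj z v}.ncard = Sz.card := by
    intro z Sz hSz
    have hset : {v : V | v ∈ P.support ∧ G.Adj z v} = ↑(Sz.image (fun i => P.getVert i)) := by
      ext v
      simp only [Set.mem_setOf_eq, Finset.coe_image, Set.mem_image, Finset.mem_coe, hSz,
        Finset.mem_filter, Finset.mem_range]
      constructor
      · rintro ⟨hv, hadj⟩
        obtain ⟨i, hiv, hile⟩ := Walk.mem_support_iff_exists_getVert.mp hv
        exact ⟨i, ⟨by omega, by rw [hiv]; exact hadj⟩, hiv⟩
      · rintro ⟨i, ⟨hilt, hadj⟩, rfl⟩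
        exact ⟨Walk.mem_support_iff_exists_getVert.mpr ⟨i, rfl, by omega⟩, hadj⟩
    rw [hset, Set.ncard_coe_finset, Finset.card_image_of_injOn]
    intro i hi j hj hij
    have hi' : i ∈ Sz := hi
    have hj' : j ∈ Sz := hj
    rw [hSz, Finset.mem_filter, Finset.mem_range] at hi' hj'
    exact hinj i j (by omega) (by omega) hij
  rw [hcard x Sx hSx, hcard y Sy hSy] at hcnt
  -- Sx and Sy are disjoint
  have hdisj : Disjoint Sx Sy := by
    rw [Finset.disjoint_left]
    intro i hix hiy
    rw [hSx, Finset.mem_filter] at hix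
    rw [hSy, Finset.mem_filter] at hiy
    have h1 := hbip x (P.getVert i) hix.2
    have h2 := hbip y (P.getVert i) hiy.2
    tauto
  set S : Finset ℕ := Sx ∪ Sy with hS
  have hcardS : Sx.card + Sy.card = S.card := (Finset.card_union_of_disjoint hdisj).symm
  -- key: no two consecutive indices i, i+1 with i odd both in S
  have hkey : ∀ i : ℕ, Odd i → i < n → ¬(i ∈ S ∧ i + 1 ∈ S) := by
    rintro i hodd hilt ⟨hi, hi1⟩
    have hadj : G.Adj (P.getVert i) (P.getVert (i + 1)) := P.adj_getVert_succ hilt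
    have hbipP := hbip _ _ hadj
    have hiL : i < P.edges.length := by rw [P.length_edges]; omega
    have hedge : s(P.getVert i, P.getVert (i + 1)) ∈ P.edges := by
      rw [← aux_edges_get P i hiL]; exact List.get_mem _ _
    have hnM : s(P.getVert i, P.getVert (i + 1)) ∉ M := by
      rw [← aux_edges_get P i hiL]
      rw [hPalt i hiL]
      exact (Nat.not_even_iff_odd.mpr hodd)
    simp only [hS, Finset.mem_union, hSx, hSy, Finset.mem_filter, Finset.mem_range] at hi hi1
    rcases hi with ⟨_, hxi⟩ | ⟨_, hyi⟩ <;> rcases hi1 with ⟨_, hxi1⟩ | ⟨_, hyi1⟩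
    · have := hbip x _ hxi; have := hbip x _ hxi1; tauto
    · exact hcon _ _ hedge hnM hxi hyi1
    · have hedge' : s(P.getVert (i+1), P.getVert i) ∈ P.edges := by
        rwa [Sym2.eq_swap]
      have hnM' : s(P.getVert (i+1), P.getVert i) ∉ M := by rwa [Sym2.eq_swap]
      exact hcon _ _ hedge' hnM' hxi1 hyi
    · have := hbip y _ hyi; have := hbip y _ hyi1; tauto
  have hbound : ∀ m ∈ S, m < n + 1 := by
    intro m hm
    rw [hS, Finset.mem_union] at hm
    rcases hm with hm | hm
    · rw [hSx, Finset.mem_filter, Finset.mem_range] at hm; exact hm.1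
    · rw [hSy, Finset.mem_filter, Finset.mem_range] at hm; exact hm.1
  -- |S| ≤ k + 2 via i ↦ (i+1)/2
  have hle : S.card ≤ k + 2 := by
    have hmaps : ∀ i ∈ S, (i + 1) / 2 ∈ Finset.range (k + 2) := by
      intro i hi
      have := hbound i hi
      rw [Finset.mem_range]
      omega
    have hinj2 : Set.InjOn (fun i => (i + 1) / 2) ↑S := by
      intro i hi j hj hij
      have hi' : i ∈ S := hi
      have hj' : j ∈ S := hj
      have hij2 : (i + 1) / 2 = (j + 1) / 2 := hij
      by_contra hne
      have hbi := hbound i hi'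
      have hbj := hbound j hj'
      have hd : (j = i + 1 ∧ i % 2 = 1) ∨ (i = j + 1 ∧ j % 2 = 1) := by omega
      rcases hd with ⟨h1, h2⟩ | ⟨h1, h2⟩
      · exact hkey i (Nat.odd_iff.mpr h2) (by omega) ⟨hi', h1 ▸ hj'⟩
      · exact hkey j (Nat.odd_iff.mpr h2) (by omega) ⟨hj', h1 ▸ hi'⟩
    have := Finset.card_le_card_of_injOn _ hmaps hinj2
    simpa using this
  omega
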